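/- arXiv:2512.21753 — 4 statements merged into one kernel-verified Lean document; each statement's English description precedes it below -/
import Mathlib

section
/- Let G ∈ ℚ⟦X⟧ be the formal power series G = X·(1 + X²)⁻¹. Then substituting G for the variable in the formal power series X·E (the series whose (n+1)-st coefficient is f(0,n) and whose constant coefficient is 0) yields X; that is, G is a compositional right-inverse of X·E. -/
/-- The number of walks of length `n` on the nonnegative integers starting at `0`,
ending at `i`, with steps `+1` or `-1`. -/
noncomputable def walkCount (i n : ℕ) : ℕ :=
  Nat.card {w : Fin (n + 1) → ℕ //
    w 0 = 0 ∧ w (Fin.last n) = i ∧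
    ∀ k : Fin n, ((w k.succ : ℤ) - (w k.castSucc : ℤ)).natAbs = 1}

/-- Composition `f ∘ g` of formal power series: substituting `g` (which is intended to
have zero constant coefficient) for the variable of `f`.  Since `g` has zero constant
term, the coefficient of `X^n` in `f(g)` only involves `g^k` for `k ≤ n`. -/
noncomputable def psComp (f g : PowerSeries ℚ) : PowerSeries ℚ :=
  PowerSeries.mk fun n =>
    ∑ k ∈ Finset.range (n + 1), PowerSeries.coeff (R := ℚ) k f * PowerSeries.coeff (R := ℚ) n (g ^ k)

section WalkCombinatorics

open DyckStep List

private def height (l : List DyckStep) (j : ℕ) : ℤ :=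
  ((l.take j).count U : ℤ) - ((l.take j).count D : ℤ)

private lemma height_succ (l : List DyckStep) {j : ℕ} (hj : j < l.length) :
    height l (j + 1) = height l j + (if l.get ⟨j, hj⟩ = U then 1 else -1) := by
  unfold height
  rw [List.take_succ, List.getElem?_eq_getElem hj]
  rcases (l.get ⟨j, hj⟩).dichotomy with h | h <;>
    · rw [List.get_eq_getElem] at h
      simp [h, List.count_append]
      ring

private def walkToList {n : ℕ} (w : Fin (n + 1) → ℕ) : List DyckStep :=
  List.ofFn fun k : Fin n => if w k.castSucc < w k.succ then U else D

private lemma walk_height {n : ℕ} (w : Fin (n + 1) → ℕ) (h0 : w 0 = 0)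
    (hs : ∀ k : Fin n, ((w k.succ : ℤ) - (w k.castSucc : ℤ)).natAbs = 1) :
    ∀ j (hj : j ≤ n), height (walkToList w) j = w ⟨j, Nat.lt_succ_of_le hj⟩ := by
  intro j
  induction j with
  | zero =>
    intro hj
    have : (⟨0, Nat.lt_succ_of_le hj⟩ : Fin (n + 1)) = 0 := rfl
    simp [height, this, h0]
  | succ j ih =>
    intro hj
    have hj' : j < n := hj
    have hlen : j < (walkToList w).length := by
      rw [walkToList, List.length_ofFn]; exact hj'
    rw [height_succ _ hlen, ih (le_of_lt hj')]
    have hget : (walkToList w).get ⟨j, hlen⟩ =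
        if w (⟨j, hj'⟩ : Fin n).castSucc < w (⟨j, hj'⟩ : Fin n).succ then U else D := by
      simp [walkToList, List.get_ofFn]
    have hcs : (⟨j, hj'⟩ : Fin n).castSucc = ⟨j, Nat.lt_succ_of_le (le_of_lt hj')⟩ := rfl
    have hsc : (⟨j, hj'⟩ : Fin n).succ = ⟨j + 1, Nat.lt_succ_of_le hj⟩ := rfl
    have hstep := hs ⟨j, hj'⟩
    rw [hcs, hsc] at hget hstep
    rcases Int.natAbs_eq_iff.mp hstep with h | h
    · have hlt : w ⟨j, Nat.lt_succ_of_le (le_of_lt hj')⟩ < w ⟨j + 1, Nat.lt_succ_of_le hj⟩ := by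
        omega
      rw [hget, if_pos hlt, if_pos rfl]
      omega
    · have hlt : ¬ w ⟨j, Nat.lt_succ_of_le (le_of_lt hj')⟩ < w ⟨j + 1, Nat.lt_succ_of_le hj⟩ := by
        omega
      rw [hget, if_neg hlt]
      simp only [reduceCtorEq, if_false]
      omega

private lemma walk_prefix {n : ℕ} (w : Fin (n + 1) → ℕ) (h0 : w 0 = 0)
    (hs : ∀ k : Fin n, ((w k.succ : ℤ) - (w k.castSucc : ℤ)).natAbs = 1) (i : ℕ) :
    ((walkToList w).take i).count D ≤ ((walkToList w).take i).count U := by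
  have hlen : (walkToList w).length = n := by rw [walkToList, List.length_ofFn]
  rcases le_or_gt i n with hi | hi
  · have := walk_height w h0 hs i hi
    unfold height at this
    omega
  · rw [List.take_of_length_le (by omega)]
    have := walk_height w h0 hs n le_rfl
    unfold height at this
    rw [List.take_of_length_le (le_of_eq hlen)] at this
    omega

private lemma hcast_aux (p : DyckWord) (j : ℕ) :
    (((p.toList.take j).count U - (p.toList.take j).count D : ℕ) : ℤ) =
      height p.toList j := by
  have := p.count_D_le_count_U j
  unfold height
  omega

private def walkEquiv (n : ℕ) :
    {w : Fin (n + 1) → ℕ // w 0 = 0 ∧ w (Fin.last n) = 0 ∧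
      ∀ k : Fin n, ((w k.succ : ℤ) - (w k.castSucc : ℤ)).natAbs = 1} ≃
    {p : DyckWord // p.toList.length = n} where
  toFun x :=
    ⟨⟨walkToList x.1, by
      have hlen : (walkToList x.1).length = n := by simp [walkToList]
      have hn := walk_height x.1 x.2.1 x.2.2.2 n le_rfl
      unfold height at hn
      rw [List.take_of_length_le (le_of_eq hlen)] at hn
      have hlast : (⟨n, Nat.lt_succ_of_le le_rfl⟩ : Fin (n + 1)) = Fin.last n := rfl
      rw [hlast, x.2.2.1] at hn
      omega, fun i => walk_prefix x.1 x.2.1 x.2.2.2 i⟩, by simp [walkToList]⟩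
  invFun y :=
    ⟨fun j => ((y.1 : DyckWord).toList.take j.1).count U -
        ((y.1 : DyckWord).toList.take j.1).count D, by
      simp, by
      obtain ⟨p, hp⟩ := y
      show (p.toList.take (Fin.last n).1).count U - (p.toList.take (Fin.last n).1).count D = 0
      rw [Fin.val_last, List.take_of_length_le (le_of_eq hp), p.count_U_eq_count_D,
        Nat.sub_self], by
      obtain ⟨p, hp⟩ := y
      intro k
      show ((((p.toList.take k.succ.1).count U - (p.toList.take k.succ.1).count D : ℕ) : ℤ) -
        (((p.toList.take k.castSucc.1).count U -
          (p.toList.take k.castSucc.1).count D : ℕ) : ℤ)).natAbs = 1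
      have hj : (k : ℕ) < p.toList.length := by rw [hp]; exact k.isLt
      have h1 := hcast_aux p k.1
      have h2 := hcast_aux p (k.1 + 1)
      have hstep := height_succ p.toList hj
      rw [Fin.val_succ, Fin.coe_castSucc, h1, h2, hstep]
      rw [List.get_eq_getElem] at hstep ⊢
      rcases (p.toList[(k : ℕ)]'hj).dichotomy with h | h <;> simp [h]⟩
  left_inv x := by
    obtain ⟨w, h0, hl, hs⟩ := x
    apply Subtype.ext
    funext j
    have hh := walk_height w h0 hs j.1 (Nat.lt_succ_iff.mp j.isLt)
    have hpre := walk_prefix w h0 hs j.1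
    have heta : (⟨j.1, Nat.lt_succ_of_le (Nat.lt_succ_iff.mp j.isLt)⟩ : Fin (n + 1)) = j :=
      Fin.eta j j.isLt
    rw [heta] at hh
    unfold height at hh
    simp only
    omega
  right_inv y := by
    obtain ⟨p, hp⟩ := y
    apply Subtype.ext
    apply DyckWord.ext
    show walkToList _ = p.toList
    apply List.ext_getElem?
    intro k
    simp only [walkToList]
    rw [List.getElem?_ofFn]
    rcases lt_or_ge k n with hk | hk
    · have hjlen : k < p.toList.length := by rw [hp]; exact hk
      rw [dif_pos hk, List.getElem?_eq_getElem hjlen]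
      refine congrArg some ?_
      beta_reduce
      have hc1 := hcast_aux p k
      have hc2 := hcast_aux p (k + 1)
      have hstep := height_succ p.toList hjlen
      rw [List.get_eq_getElem] at hstep
      split_ifs with hc
      · simp only [Fin.coe_castSucc, Fin.val_succ] at hc
        rcases (p.toList[k]'hjlen).dichotomy with h | h
        · exact h.symm
        · rw [h, if_neg (by simp)] at hstep
          omega
      · simp only [Fin.coe_castSucc, Fin.val_succ] at hc
        rcases (p.toList[k]'hjlen).dichotomy with h | h
        · rw [h, if_pos rfl] at hstep
          omega
        · exact h.symm
    · rw [dif_neg (by omega), List.getElem?_eq_none (by rw [hp]; exact hk)]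

private lemma walkCount_eq (n : ℕ) :
    walkCount 0 n = Nat.card {p : DyckWord // p.toList.length = n} := by
  unfold walkCount
  exact Nat.card_congr (walkEquiv n)

lemma walkCount_even (m : ℕ) : walkCount 0 (2 * m) = catalan m := by
  rw [walkCount_eq]
  have e2 : {p : DyckWord // p.toList.length = 2 * m} ≃ {p : DyckWord // p.semilength = m} :=
    Equiv.subtypeEquivRight (fun p => by
      constructor
      · intro h
        have := p.two_mul_semilength_eq_length
        omega
      · intro h
        rw [← p.two_mul_semilength_eq_length, h])
  rw [Nat.card_congr e2, Nat.card_eq_fintype_card,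
    DyckWord.card_dyckWord_semilength_eq_catalan]

lemma walkCount_odd (n : ℕ) (h : ¬ 2 ∣ n) : walkCount 0 n = 0 := by
  rw [walkCount_eq]
  haveI : IsEmpty {p : DyckWord // p.toList.length = n} :=
    ⟨fun ⟨p, hp⟩ => h ⟨p.semilength, by rw [← hp, ← p.two_mul_semilength_eq_length]⟩⟩
  exact Nat.card_of_isEmpty

end WalkCombinatorics

open PowerSeries Finset

private lemma coeff_pow_eq_zero' {g : ℚ⟦X⟧} (hg : constantCoeff g = 0)
    {n k : ℕ} (h : n < k) : PowerSeries.coeff n (g ^ k) = 0 := by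
  obtain ⟨h', rfl⟩ := PowerSeries.X_dvd_iff.mpr hg
  rw [mul_pow, PowerSeries.coeff_X_pow_mul']
  simp [Nat.not_le.mpr h]

private lemma psComp_congr_coeff {u v : ℚ⟦X⟧} (g : ℚ⟦X⟧) {n : ℕ}
    (h : ∀ k ≤ n, PowerSeries.coeff k u = PowerSeries.coeff k v) :
    PowerSeries.coeff n (psComp u g) = PowerSeries.coeff n (psComp v g) := by
  simp only [psComp, coeff_mk]
  exact Finset.sum_congr rfl fun k hk => by
    rw [h k (Nat.lt_succ_iff.mp (Finset.mem_range.mp hk))]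

private lemma psComp_coe (P : Polynomial ℚ) {g : ℚ⟦X⟧} (hg : constantCoeff g = 0) :
    psComp (P : ℚ⟦X⟧) g = Polynomial.aeval g P := by
  ext n
  rw [Polynomial.aeval_eq_sum_range, map_sum]
  simp only [psComp, coeff_mk, Polynomial.coeff_coe, map_smul, smul_eq_mul]
  set a : ℕ → ℚ := fun k => P.coeff k * PowerSeries.coeff n (g ^ k) with ha
  have e1 : ∑ k ∈ range (n+1), a k = ∑ k ∈ range (max (n+1) (P.natDegree+1)), a k :=
    Finset.sum_subset (Finset.range_subset_range.mpr (le_max_left _ _)) (fun k _ hk => by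
      have hn : n < k := by
        simp only [Finset.mem_range, not_lt] at hk ⊢
        omega
      simp [ha, coeff_pow_eq_zero' hg hn])
  have e2 : ∑ k ∈ range (P.natDegree+1), a k = ∑ k ∈ range (max (n+1) (P.natDegree+1)), a k :=
    Finset.sum_subset (Finset.range_subset_range.mpr (le_max_right _ _)) (fun k _ hk => by
      have hd : P.natDegree < k := by
        simp only [Finset.mem_range, not_lt] at hk ⊢
        omega
      simp [ha, Polynomial.coeff_eq_zero_of_natDegree_lt hd])
  rw [e1, ← e2]

private lemma psComp_mul (f₁ f₂ g : ℚ⟦X⟧) (hg : constantCoeff g = 0) :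
    psComp (f₁ * f₂) g = psComp f₁ g * psComp f₂ g := by
  ext n
  set P₁ := trunc (n+1) f₁ with hP₁
  set P₂ := trunc (n+1) f₂ with hP₂
  have h₁ : ∀ k ≤ n, PowerSeries.coeff k (P₁ : ℚ⟦X⟧) = PowerSeries.coeff k f₁ := fun k hk => by
    rw [Polynomial.coeff_coe, hP₁, coeff_trunc, if_pos (Nat.lt_succ_of_le hk)]
  have h₂ : ∀ k ≤ n, PowerSeries.coeff k (P₂ : ℚ⟦X⟧) = PowerSeries.coeff k f₂ := fun k hk => by
    rw [Polynomial.coeff_coe, hP₂, coeff_trunc, if_pos (Nat.lt_succ_of_le hk)]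
  have hmul : ∀ k ≤ n, PowerSeries.coeff k ((↑(P₁ * P₂) : ℚ⟦X⟧)) =
      PowerSeries.coeff k (f₁ * f₂) := fun k hk => by
    rw [Polynomial.coe_mul, PowerSeries.coeff_mul, PowerSeries.coeff_mul]
    refine Finset.sum_congr rfl fun p hp => ?_
    have hpk := Finset.HasAntidiagonal.mem_antidiagonal.mp hp
    rw [h₁ p.1 (le_trans (by omega) hk), h₂ p.2 (le_trans (by omega) hk)]
  calc PowerSeries.coeff n (psComp (f₁ * f₂) g)
      = PowerSeries.coeff n (psComp (↑(P₁ * P₂)) g) :=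
        (psComp_congr_coeff g hmul).symm
    _ = PowerSeries.coeff n (Polynomial.aeval g (P₁ * P₂)) := by rw [psComp_coe _ hg]
    _ = PowerSeries.coeff n (Polynomial.aeval g P₁ * Polynomial.aeval g P₂) := by rw [map_mul]
    _ = PowerSeries.coeff n (psComp (↑P₁) g * psComp (↑P₂) g) := by
        rw [psComp_coe _ hg, psComp_coe _ hg]
    _ = PowerSeries.coeff n (psComp f₁ g * psComp f₂ g) := by
        rw [PowerSeries.coeff_mul, PowerSeries.coeff_mul]
        refine Finset.sum_congr rfl fun p hp => ?_
        have hpk := Finset.HasAntidiagonal.mem_antidiagonal.mp hp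
        rw [psComp_congr_coeff g (fun k hk => h₁ k (le_trans hk (by omega))),
          psComp_congr_coeff g (fun k hk => h₂ k (le_trans hk (by omega)))]

private lemma psComp_add (f₁ f₂ g : ℚ⟦X⟧) :
    psComp (f₁ + f₂) g = psComp f₁ g + psComp f₂ g := by
  ext n
  simp [psComp, add_mul, Finset.sum_add_distrib]

private lemma psComp_X (g : ℚ⟦X⟧) (hg : constantCoeff g = 0) :
    psComp PowerSeries.X g = g := by
  have h : psComp PowerSeries.X g = psComp (↑(Polynomial.X : Polynomial ℚ)) g := by
    ext n
    exact (psComp_congr_coeff g (fun k _ => by rw [Polynomial.coe_X])).symm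
  rw [h, psComp_coe _ hg, Polynomial.aeval_X]

private lemma walkCount_cast_odd {n : ℕ} (h : ¬ 2 ∣ n) : (walkCount 0 n : ℚ) = 0 := by
  rw [walkCount_odd n h, Nat.cast_zero]

private lemma sum_even (m : ℕ) :
    ∑ p ∈ Finset.HasAntidiagonal.antidiagonal (2 * m), (walkCount 0 p.1 : ℚ) * walkCount 0 p.2
      = (catalan (m + 1) : ℚ) := by
  have hinj : Function.Injective (fun p : ℕ × ℕ => (2 * p.1, 2 * p.2)) := by
    intro a b h
    simp only [Prod.mk.injEq] at h
    exact Prod.ext (by omega) (by omega)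
  set emb : ℕ × ℕ ↪ ℕ × ℕ := ⟨fun p => (2 * p.1, 2 * p.2), hinj⟩ with hemb
  have hsub : (Finset.HasAntidiagonal.antidiagonal m).map emb ⊆ Finset.HasAntidiagonal.antidiagonal (2 * m) := by
    intro x hx
    obtain ⟨⟨i, j⟩, hij, rfl⟩ := Finset.mem_map.mp hx
    have := Finset.HasAntidiagonal.mem_antidiagonal.mp hij
    simp only [hemb, Function.Embedding.coeFn_mk, Finset.HasAntidiagonal.mem_antidiagonal]
    omega
  have hzero : ∀ x ∈ Finset.HasAntidiagonal.antidiagonal (2 * m), x ∉ (Finset.HasAntidiagonal.antidiagonal m).map emb →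
      (walkCount 0 x.1 : ℚ) * walkCount 0 x.2 = 0 := by
    rintro ⟨a, b⟩ hab hmem
    have hab' := Finset.HasAntidiagonal.mem_antidiagonal.mp hab
    by_cases ha : 2 ∣ a
    · by_cases hb : 2 ∣ b
      · exfalso
        apply hmem
        obtain ⟨i, rfl⟩ := ha
        obtain ⟨j, rfl⟩ := hb
        exact Finset.mem_map.mpr ⟨(i, j), Finset.HasAntidiagonal.mem_antidiagonal.mpr (by omega), rfl⟩
      · rw [walkCount_cast_odd hb, mul_zero]
    · rw [walkCount_cast_odd ha, zero_mul]
  rw [← Finset.sum_subset hsub hzero, Finset.sum_map]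
  simp only [hemb, Function.Embedding.coeFn_mk]
  rw [catalan_succ']
  push_cast
  refine Finset.sum_congr rfl fun p _ => ?_
  rw [walkCount_even p.1, walkCount_even p.2]

private lemma E_eq :
    (PowerSeries.mk fun n => (walkCount 0 n : ℚ)) =
      1 + PowerSeries.X ^ 2 * (PowerSeries.mk fun n => (walkCount 0 n : ℚ)) ^ 2 := by
  ext n
  rw [map_add, PowerSeries.coeff_one, PowerSeries.coeff_X_pow_mul', coeff_mk]
  match n with
  | 0 =>
    have h0 : walkCount 0 0 = catalan 0 := by
      simpa using walkCount_even 0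
    simp [h0]
  | 1 =>
    have h1 : walkCount 0 1 = 0 := walkCount_odd 1 (by omega)
    simp [h1]
  | (n + 2) =>
    have h2 : (2 : ℕ) ≤ n + 2 := by omega
    rw [if_neg (by omega), if_pos h2, zero_add]
    have hidx : n + 2 - 2 = n := by omega
    rw [hidx, pow_two, PowerSeries.coeff_mul]
    simp only [coeff_mk]
    rcases Nat.even_or_odd n with ⟨m, rfl⟩ | hodd
    · have h2m : m + m = 2 * m := by omega
      rw [h2m, sum_even]
      have h2m2 : 2 * m + 2 = 2 * (m + 1) := by omega
      rw [h2m2, walkCount_even]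
    · have hno : ¬ 2 ∣ (n + 2) := by
        rcases hodd with ⟨k, hk⟩
        omega
      rw [walkCount_cast_odd hno]
      refine (Finset.sum_eq_zero fun p hp => ?_).symm
      have hps := Finset.HasAntidiagonal.mem_antidiagonal.mp hp
      rcases hodd with ⟨k, hk⟩
      by_cases hp1 : 2 ∣ p.1
      · rw [walkCount_cast_odd (n := p.2) (by omega), mul_zero]
      · rw [walkCount_cast_odd hp1, zero_mul]

theorem comp_inverse_excursions :
    psComp (PowerSeries.X * PowerSeries.mk fun n => (walkCount 0 n : ℚ))
      (PowerSeries.X * (1 + PowerSeries.X ^ 2)⁻¹) = PowerSeries.X := by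
  set E : ℚ⟦X⟧ := PowerSeries.mk fun n => (walkCount 0 n : ℚ) with hE
  set G : ℚ⟦X⟧ := PowerSeries.X * (1 + PowerSeries.X ^ 2)⁻¹ with hG
  set F : ℚ⟦X⟧ := PowerSeries.X * E with hF
  clear_value E G F
  have hGc : constantCoeff G = 0 := by
    rw [hG, map_mul, PowerSeries.constantCoeff_X, zero_mul]
  have hone : constantCoeff (1 + PowerSeries.X ^ 2 : ℚ⟦X⟧) ≠ 0 := by
    simp
  have h1 : (1 + PowerSeries.X ^ 2) * G = PowerSeries.X := by
    rw [hG, ← mul_assoc, mul_comm (1 + PowerSeries.X ^ 2) PowerSeries.X, mul_assoc,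
      PowerSeries.mul_inv_cancel _ hone, mul_one]
  have hXG : PowerSeries.X = G + G * PowerSeries.X ^ 2 := by
    linear_combination -h1
  have hE2 : E = 1 + PowerSeries.X ^ 2 * E ^ 2 := by rw [hE]; exact E_eq
  have hFeq : F = PowerSeries.X + PowerSeries.X * (F * F) := by
    rw [hF]
    nth_rewrite 1 [hE2]
    ring
  set K : ℚ⟦X⟧ := psComp F G with hK
  clear_value K
  have hKeq : K = G + G * (K * K) := by
    conv_lhs => rw [hK, hFeq]
    rw [psComp_add, psComp_X _ hGc, psComp_mul _ _ _ hGc, psComp_mul _ _ _ hGc,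
      psComp_X _ hGc, ← hK]
  have h0 : (K - PowerSeries.X) * (1 - G * (K + PowerSeries.X)) = 0 := by
    linear_combination hKeq - hXG
  have hunit : (1 - G * (K + PowerSeries.X) : ℚ⟦X⟧) ≠ 0 := by
    intro h
    have := congrArg (constantCoeff) h
    rw [map_sub, map_one, map_mul, hGc, zero_mul, sub_zero, map_zero] at this
    exact one_ne_zero this
  exact sub_eq_zero.mp ((mul_eq_zero.mp h0).resolve_right hunit)
end

section
/- For all natural numbers i and n, and real t with 0 < t < 1/2 and real x with 0 ≤ x < x₁(t) := (1 + √(1 − 4t²))/(2t), the double series Σ_{n=0}^∞ (Σ_{i=0}^{n} f(i,n)·x^i)·tⁿ converges and its sum equals 1/(t·(x₁(t) − x)). -/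
namespace WalkAux

abbrev W (n i : ℕ) : Type :=
  {w : Fin (n + 1) → ℕ //
    w 0 = 0 ∧ w (Fin.last n) = i ∧
    ∀ k : Fin n, ((w k.succ : ℤ) - (w k.castSucc : ℤ)).natAbs = 1}

lemma walkCount_eq (i n : ℕ) : walkCount i n = Nat.card (W n i) := rfl

lemma init_mem {n : ℕ} (w : Fin (n + 2) → ℕ) (h0 : w 0 = 0)
    (hstep : ∀ k : Fin (n + 1), ((w k.succ : ℤ) - (w k.castSucc : ℤ)).natAbs = 1) :
    Fin.init w 0 = 0 ∧ Fin.init w (Fin.last n) = w ((Fin.last n).castSucc) ∧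
      ∀ k : Fin n, ((Fin.init w k.succ : ℤ) - (Fin.init w k.castSucc : ℤ)).natAbs = 1 := by
  refine ⟨?_, rfl, ?_⟩
  · simpa [Fin.init] using h0
  · intro k
    have := hstep k.castSucc
    rw [Fin.succ_castSucc] at this; exact this

lemma snoc_mem {n i j : ℕ} (w : Fin (n + 1) → ℕ) (h0 : w 0 = 0)
    (hlast : w (Fin.last n) = j)
    (hstep : ∀ k : Fin n, ((w k.succ : ℤ) - (w k.castSucc : ℤ)).natAbs = 1)
    (hij : ((i : ℤ) - (j : ℤ)).natAbs = 1) :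
    (Fin.snoc w i : Fin (n + 2) → ℕ) 0 = 0 ∧
    (Fin.snoc w i : Fin (n + 2) → ℕ) (Fin.last (n+1)) = i ∧
      ∀ k : Fin (n + 1),
        (((Fin.snoc w i : Fin (n + 2) → ℕ) k.succ : ℤ) -
          ((Fin.snoc w i : Fin (n + 2) → ℕ) k.castSucc : ℤ)).natAbs = 1 := by
  refine ⟨?_, ?_, ?_⟩
  · show (Fin.snoc w i : Fin (n+2) → ℕ) ((0 : Fin (n+1)).castSucc) = 0
    rw [Fin.snoc_castSucc]; exact h0
  · simp [Fin.snoc_last]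
  · intro k
    rcases Fin.eq_castSucc_or_eq_last k with ⟨k', rfl⟩ | rfl
    · have h1 : (Fin.snoc w i : Fin (n+2) → ℕ) k'.castSucc.succ = w k'.succ := by
        rw [Fin.succ_castSucc, Fin.snoc_castSucc]
      have h2 : (Fin.snoc w i : Fin (n+2) → ℕ) k'.castSucc.castSucc = w k'.castSucc := by
        rw [Fin.snoc_castSucc]
      rw [h1, h2]
      exact hstep k'
    · rw [Fin.succ_last, Fin.snoc_last, Fin.snoc_castSucc, hlast]
      exact hij

lemma penult_eq {n i : ℕ} (w : W (n + 1) i) :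
    ((i : ℤ) - (w.1 ((Fin.last n).castSucc) : ℤ)).natAbs = 1 := by
  have h := w.2.2.2 (Fin.last n)
  rw [Fin.succ_last, w.2.2.1] at h
  exact h

def equivZero (n : ℕ) : W (n + 1) 0 ≃ W n 1 where
  toFun w := by
    refine ⟨Fin.init w.1, ?_⟩
    obtain ⟨h1, h2, h3⟩ := init_mem w.1 w.2.1 w.2.2.2
    refine ⟨h1, ?_, h3⟩
    have := penult_eq w
    rw [h2]; omega
  invFun v := ⟨Fin.snoc v.1 0, snoc_mem v.1 v.2.1 v.2.2.1 v.2.2.2 (by norm_num)⟩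
  left_inv w := by
    apply Subtype.ext
    show Fin.snoc (Fin.init w.1) 0 = w.1
    have hs := Fin.snoc_init_self w.1
    rw [w.2.2.1] at hs
    exact hs
  right_inv v := by
    apply Subtype.ext
    dsimp only
    rw [Fin.init_snoc]

def equivSucc (n i : ℕ) : W (n + 1) (i + 1) ≃ W n i ⊕ W n (i + 2) where
  toFun w :=
    if h : w.1 ((Fin.last n).castSucc) = i then
      Sum.inl ⟨Fin.init w.1, by
        obtain ⟨h1, h2, h3⟩ := init_mem w.1 w.2.1 w.2.2.2
        exact ⟨h1, by rw [h2, h], h3⟩⟩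
    else
      Sum.inr ⟨Fin.init w.1, by
        obtain ⟨h1, h2, h3⟩ := init_mem w.1 w.2.1 w.2.2.2
        refine ⟨h1, ?_, h3⟩
        have hp := penult_eq w
        rw [h2]; omega⟩
  invFun v :=
    match v with
    | Sum.inl v => ⟨Fin.snoc v.1 (i + 1),
        snoc_mem v.1 v.2.1 v.2.2.1 v.2.2.2 (by push_cast; omega)⟩
    | Sum.inr v => ⟨Fin.snoc v.1 (i + 1),
        snoc_mem v.1 v.2.1 v.2.2.1 v.2.2.2 (by push_cast; omega)⟩
  left_inv w := by
    have hw : Fin.snoc (Fin.init w.1) (i + 1) = w.1 := by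
      have hs := Fin.snoc_init_self w.1
      rw [w.2.2.1] at hs
      exact hs
    dsimp only
    by_cases h : w.1 ((Fin.last n).castSucc) = i
    · rw [dif_pos h]
      exact Subtype.ext hw
    · rw [dif_neg h]
      exact Subtype.ext hw
  right_inv v := by
    match v with
    | Sum.inl v =>
      have hp : (Fin.snoc v.1 (i+1) : Fin (n+2) → ℕ) ((Fin.last n).castSucc) = i := by
        rw [Fin.snoc_castSucc]; exact v.2.2.1
      dsimp only
      rw [dif_pos hp]
      congr 1
      apply Subtype.ext
      dsimp only
      rw [Fin.init_snoc]
    | Sum.inr v =>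
      have hp : (Fin.snoc v.1 (i+1) : Fin (n+2) → ℕ) ((Fin.last n).castSucc) = i + 2 := by
        rw [Fin.snoc_castSucc]; exact v.2.2.1
      dsimp only
      rw [dif_neg (show ¬ (Fin.snoc v.1 (i+1) : Fin (n+2) → ℕ) ((Fin.last n).castSucc) = i by omega)]
      congr 1
      apply Subtype.ext
      dsimp only
      rw [Fin.init_snoc]

instance instSubsingletonW0 (i : ℕ) : Subsingleton (W 0 i) := by
  constructor
  rintro ⟨w, h0, _, _⟩ ⟨w', h0', _, _⟩
  apply Subtype.ext
  funext k
  have hk : k = 0 := by apply Fin.ext; omega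
  rw [hk]
  show w 0 = w' 0
  rw [h0, h0']

instance instFiniteW : ∀ (n i : ℕ), Finite (W n i) := by
  intro n
  induction n with
  | zero => intro i; exact Finite.of_subsingleton
  | succ n ih =>
    intro i
    match i with
    | 0 => exact Finite.of_equiv _ (equivZero n).symm
    | i + 1 => exact Finite.of_equiv _ (equivSucc n i).symm

lemma walkCount_zero_zero : walkCount 0 0 = 1 := by
  rw [walkCount_eq, Nat.card_eq_one_iff_unique]
  exact ⟨inferInstance, ⟨⟨fun _ => 0, rfl, rfl, fun k => k.elim0⟩⟩⟩

lemma walkCount_succ_zero (i : ℕ) : walkCount (i + 1) 0 = 0 := by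
  rw [walkCount_eq]
  have : IsEmpty (W 0 (i + 1)) := by
    constructor
    rintro ⟨w, h0, hlast, _⟩
    have h : (Fin.last 0) = (0 : Fin 1) := rfl
    rw [h, h0] at hlast
    omega
  exact Nat.card_of_isEmpty

lemma walkCount_zero_succ (n : ℕ) : walkCount 0 (n + 1) = walkCount 1 n :=
  Nat.card_congr (equivZero n)

lemma walkCount_succ_succ (i n : ℕ) :
    walkCount (i + 1) (n + 1) = walkCount i n + walkCount (i + 2) n := by
  rw [walkCount_eq, walkCount_eq, walkCount_eq,
    Nat.card_congr (equivSucc n i), Nat.card_sum]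

lemma walkCount_le (i n : ℕ) : walkCount i n ≤ 2 ^ n := by
  induction n generalizing i with
  | zero =>
    match i with
    | 0 => rw [walkCount_zero_zero]; norm_num
    | i + 1 => rw [walkCount_succ_zero]; positivity
  | succ n ih =>
    match i with
    | 0 =>
      rw [walkCount_zero_succ]
      exact le_trans (ih 1) (Nat.pow_le_pow_right (by norm_num) (by omega))
    | i + 1 =>
      rw [walkCount_succ_succ]
      calc walkCount i n + walkCount (i + 2) n ≤ 2 ^ n + 2 ^ n := add_le_add (ih i) (ih (i + 2))
        _ = 2 ^ (n + 1) := by rw [pow_succ]; ring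

lemma walkCount_eq_zero {i n : ℕ} (h : n < i) : walkCount i n = 0 := by
  induction n generalizing i with
  | zero =>
    match i, h with
    | i + 1, _ => exact walkCount_succ_zero i
  | succ n ih =>
    match i, h with
    | i + 1, h =>
      rw [walkCount_succ_succ, ih (by omega), ih (by omega)]

end WalkAux

namespace WalkAux

noncomputable def xone (t : ℝ) : ℝ := (1 + Real.sqrt (1 - 4 * t ^ 2)) / (2 * t)
noncomputable def xtwo (t : ℝ) : ℝ := (1 - Real.sqrt (1 - 4 * t ^ 2)) / (2 * t)
noncomputable def F (t : ℝ) (i : ℕ) : ℝ := ∑' n : ℕ, (walkCount i n : ℝ) * t ^ n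

section
variable {t : ℝ} (ht0 : 0 < t) (ht1 : t < 1 / 2)

include ht0 ht1

lemma sqrt_pos' : 0 < Real.sqrt (1 - 4 * t ^ 2) := by
  apply Real.sqrt_pos.2; nlinarith

lemma sqrt_lt_one' : Real.sqrt (1 - 4 * t ^ 2) < 1 := by
  have h := Real.sq_sqrt (show (0:ℝ) ≤ 1 - 4 * t ^ 2 by nlinarith)
  nlinarith [Real.sqrt_nonneg (1 - 4 * t ^ 2)]

lemma one_lt_xone : 1 < xone t := by
  rw [xone, lt_div_iff₀ (by linarith)]
  nlinarith [Real.sqrt_nonneg (1 - 4 * t ^ 2)]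

lemma xtwo_pos : 0 < xtwo t := by
  rw [xtwo]
  exact div_pos (by linarith [sqrt_lt_one' ht0 ht1]) (by linarith)

lemma xtwo_lt_one : xtwo t < 1 := by
  rw [xtwo, div_lt_one (by linarith)]
  have h := Real.sq_sqrt (show (0:ℝ) ≤ 1 - 4 * t ^ 2 by nlinarith)
  nlinarith [Real.sqrt_nonneg (1 - 4 * t ^ 2)]

lemma xone_root : t * xone t ^ 2 + t = xone t := by
  have h : (Real.sqrt (1 - 4 * t ^ 2)) ^ 2 = 1 - 4 * t ^ 2 :=
    Real.sq_sqrt (by nlinarith)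
  rw [xone]
  field_simp
  ring_nf at h ⊢
  linear_combination h

lemma xtwo_root : t * xtwo t ^ 2 + t = xtwo t := by
  have h : (Real.sqrt (1 - 4 * t ^ 2)) ^ 2 = 1 - 4 * t ^ 2 :=
    Real.sq_sqrt (by nlinarith)
  rw [xtwo]
  field_simp
  ring_nf at h ⊢
  linear_combination h

lemma xone_sub_xtwo : xone t - xtwo t = Real.sqrt (1 - 4 * t ^ 2) / t := by
  rw [xone, xtwo]; field_simp; ring

lemma t_xtwo_lt_one : t * xtwo t < 1 := by
  have h : t * xtwo t = (1 - Real.sqrt (1 - 4 * t ^ 2)) / 2 := by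
    rw [xtwo]; field_simp
  rw [h]
  have := sqrt_pos' ht0 ht1
  linarith

lemma summable_walk (i : ℕ) : Summable (fun n => (walkCount i n : ℝ) * t ^ n) := by
  apply Summable.of_nonneg_of_le (fun n => by positivity) (fun n => ?_)
    (summable_geometric_of_lt_one (by linarith) (by linarith) :
      Summable fun n : ℕ => (2 * t) ^ n)
  calc (walkCount i n : ℝ) * t ^ n ≤ 2 ^ n * t ^ n := by
        apply mul_le_mul_of_nonneg_right _ (by positivity)
        exact_mod_cast walkCount_le i n
    _ = (2 * t) ^ n := by rw [mul_pow]

lemma F_nonneg (i : ℕ) : 0 ≤ F t i :=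
  tsum_nonneg (fun n => by positivity)

lemma F_le (i : ℕ) : F t i ≤ (1 - 2 * t)⁻¹ := by
  have h := Summable.tsum_le_tsum (f := fun n => (walkCount i n : ℝ) * t ^ n)
    (g := fun n : ℕ => (2 * t) ^ n) ?_ (summable_walk ht0 ht1 i)
    (summable_geometric_of_lt_one (by linarith) (by linarith))
  · rw [tsum_geometric_of_lt_one (by linarith) (by linarith)] at h
    exact h
  · intro n
    calc (walkCount i n : ℝ) * t ^ n ≤ 2 ^ n * t ^ n := by
          apply mul_le_mul_of_nonneg_right _ (by positivity)
          exact_mod_cast walkCount_le i n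
      _ = (2 * t) ^ n := by rw [mul_pow]

lemma F_zero_eq : F t 0 = 1 + t * F t 1 := by
  rw [F, Summable.tsum_eq_zero_add (summable_walk ht0 ht1 0)]
  congr 1
  · simp [walkCount_zero_zero]
  · rw [show (fun n : ℕ => (walkCount 0 (n + 1) : ℝ) * t ^ (n + 1)) =
        (fun n : ℕ => t * ((walkCount 1 n : ℝ) * t ^ n)) from
      funext fun n => by rw [walkCount_zero_succ]; ring]
    rw [tsum_mul_left]
    rfl

lemma F_succ_eq (i : ℕ) : F t (i + 1) = t * F t i + t * F t (i + 2) := by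
  rw [F, Summable.tsum_eq_zero_add (summable_walk ht0 ht1 (i + 1))]
  rw [show (fun n : ℕ => (walkCount (i + 1) (n + 1) : ℝ) * t ^ (n + 1)) =
      (fun n : ℕ => t * ((walkCount i n : ℝ) * t ^ n) +
        t * ((walkCount (i + 2) n : ℝ) * t ^ n)) from
    funext fun n => by rw [walkCount_succ_succ]; push_cast; ring]
  rw [Summable.tsum_add ((summable_walk ht0 ht1 i).mul_left t)
    ((summable_walk ht0 ht1 (i + 2)).mul_left t),
    tsum_mul_left, tsum_mul_left]
  simp [walkCount_succ_zero, F]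

end
end WalkAux

namespace WalkAux

lemma seq_closed {t x₁ x₂ a b : ℝ} (H : ℕ → ℝ) (ht : t ≠ 0)
    (h1 : t * x₁ ^ 2 + t = x₁) (h2 : t * x₂ ^ 2 + t = x₂)
    (hrec : ∀ i, H (i + 1) = t * H i + t * H (i + 2))
    (hab1 : a + b = H 0) (hab2 : a * x₁ + b * x₂ = H 1) :
    ∀ i, H i = a * x₁ ^ i + b * x₂ ^ i := by
  have key : ∀ i, H i = a * x₁ ^ i + b * x₂ ^ i ∧
      H (i + 1) = a * x₁ ^ (i + 1) + b * x₂ ^ (i + 1) := by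
    intro i
    induction i with
    | zero =>
      constructor
      · simpa using hab1.symm
      · simpa using hab2.symm
    | succ i ih =>
      refine ⟨ih.2, ?_⟩
      have e : t * H (i + 2) = t * (a * x₁ ^ (i + 2) + b * x₂ ^ (i + 2)) := by
        linear_combination (-1) * hrec i - t * ih.1 + ih.2 -
          a * x₁ ^ i * h1 - b * x₂ ^ i * h2
      exact mul_left_cancel₀ ht e
  exact fun i => (key i).1

section
variable {t : ℝ} (ht0 : 0 < t) (ht1 : t < 1 / 2)
include ht0 ht1

lemma F_eq (i : ℕ) : F t i = 1 / (t * xone t ^ (i + 1)) := by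
  have hroot1 := xone_root ht0 ht1
  have hroot2 := xtwo_root ht0 ht1
  have hx1 : 1 < xone t := one_lt_xone ht0 ht1
  have hx2p : 0 < xtwo t := xtwo_pos ht0 ht1
  have hx2lt : xtwo t < 1 := xtwo_lt_one ht0 ht1
  set x₁ := xone t with hx₁def
  set x₂ := xtwo t with hx₂def
  have hx1p : (0:ℝ) < x₁ := by linarith
  have hx1ne : x₁ ≠ 0 := ne_of_gt hx1p
  have htne : t ≠ 0 := ne_of_gt ht0
  set H : ℕ → ℝ := fun i => F t i - 1 / (t * x₁ ^ (i + 1)) with hH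
  -- key power identity
  have key : ∀ k : ℕ, t * (1 / (t * x₁ ^ (k + 1))) + t * (1 / (t * x₁ ^ (k + 3)))
      = 1 / (t * x₁ ^ (k + 2)) := by
    intro k
    have h3 : x₁ ^ (k + 3) = x₁ ^ (k + 1) * x₁ ^ 2 := by ring
    have h2 : x₁ ^ (k + 2) = x₁ ^ (k + 1) * x₁ := by ring
    have hne : x₁ ^ (k + 1) ≠ 0 := pow_ne_zero _ hx1ne
    rw [h3, h2]
    field_simp
    linear_combination hroot1
  -- recurrence for H
  have hrec : ∀ i, H (i + 1) = t * H i + t * H (i + 2) := by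
    intro i
    have hF := F_succ_eq ht0 ht1 i
    have hk := key i
    simp only [hH]
    linear_combination hF + hk
  -- boundary for H
  have hH0 : H 0 = t * H 1 := by
    have hF := F_zero_eq ht0 ht1
    have hid : 1 / (t * x₁ ^ (0 + 1)) = 1 + t * (1 / (t * x₁ ^ (1 + 1))) := by
      field_simp
      linear_combination (-x₁) * hroot1
    simp only [hH]
    linear_combination hF - hid
  -- closed form
  have hd : x₂ < x₁ := by
    have := xone_sub_xtwo ht0 ht1
    have hs := sqrt_pos' ht0 ht1
    nlinarith [div_pos hs ht0]
  have hdne : x₁ - x₂ ≠ 0 := by linarith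
  set a : ℝ := (H 1 - H 0 * x₂) / (x₁ - x₂) with hadef
  set b : ℝ := (H 0 * x₁ - H 1) / (x₁ - x₂) with hbdef
  have hab1 : a + b = H 0 := by
    rw [hadef, hbdef]
    field_simp
    ring
  have hab2 : a * x₁ + b * x₂ = H 1 := by
    rw [hadef, hbdef]
    field_simp
    ring
  have closed := seq_closed H htne hroot1 hroot2 hrec hab1 hab2
  -- boundedness of H
  set M : ℝ := (1 - 2 * t)⁻¹ + 1 / t with hMdef
  have hM : ∀ i, |H i| ≤ M := by
    intro i
    have h1 : 0 ≤ F t i := F_nonneg ht0 ht1 i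
    have h2 : F t i ≤ (1 - 2 * t)⁻¹ := F_le ht0 ht1 i
    have hxp : (1:ℝ) ≤ x₁ ^ (i + 1) := one_le_pow₀ hx1.le
    have hc1 : 0 < 1 / (t * x₁ ^ (i + 1)) := by positivity
    have hc2 : 1 / (t * x₁ ^ (i + 1)) ≤ 1 / t := by
      apply one_div_le_one_div_of_le ht0
      nlinarith
    have hB : (0:ℝ) ≤ (1 - 2 * t)⁻¹ := by
      apply inv_nonneg.2; linarith
    rw [abs_le]
    constructor
    · simp only [hH]; rw [hMdef]; linarith
    · simp only [hH]; rw [hMdef]; linarith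
  -- a = 0
  have ha0 : a = 0 := by
    by_contra ha
    obtain ⟨k, hk⟩ := pow_unbounded_of_one_lt ((M + |b|) / |a|) hx1
    have habs : |a| * x₁ ^ k ≤ M + |b| := by
      have hc := closed k
      have he : a * x₁ ^ k = H k - b * x₂ ^ k := by linarith
      have hx2k : |x₂| ^ k ≤ 1 :=
        pow_le_one₀ (abs_nonneg _) (by rw [abs_of_pos hx2p]; linarith)
      calc |a| * x₁ ^ k = |a * x₁ ^ k| := by
            rw [abs_mul, abs_of_pos (pow_pos hx1p k)]
        _ = |H k - b * x₂ ^ k| := by rw [he]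
        _ ≤ |H k| + |b * x₂ ^ k| := abs_sub _ _
        _ ≤ M + |b| := by
            apply add_le_add (hM k)
            rw [abs_mul, abs_pow]
            calc |b| * |x₂| ^ k ≤ |b| * 1 :=
                  mul_le_mul_of_nonneg_left hx2k (abs_nonneg b)
              _ = |b| := mul_one _
    have h2 : x₁ ^ k ≤ (M + |b|) / |a| := by
      rw [le_div_iff₀ (abs_pos.2 ha)]
      linarith [habs]
    linarith
  -- b = 0
  have hb0 : b = 0 := by
    have hc0 := closed 0
    have hc1 := closed 1
    simp only [pow_zero, pow_one, mul_one, ha0, zero_mul, zero_add] at hc0 hc1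
    have hz : b * (1 - t * x₂) = 0 := by
      rw [hc0, hc1] at hH0
      linear_combination hH0
    rcases mul_eq_zero.1 hz with h | h
    · exact h
    · exfalso
      have := t_xtwo_lt_one ht0 ht1
      rw [← hx₂def] at this
      linarith
  have hHi : H i = 0 := by
    rw [closed i, ha0, hb0]
    ring
  have : F t i - 1 / (t * x₁ ^ (i + 1)) = 0 := hHi
  linarith

end
end WalkAux

theorem full_generating_function_sum (t x : ℝ) (ht0 : 0 < t) (ht1 : t < 1 / 2)
    (hx0 : 0 ≤ x) (hx1 : x < (1 + Real.sqrt (1 - 4 * t ^ 2)) / (2 * t)) :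
    HasSum
      (fun n : ℕ => (∑ i ∈ Finset.range (n + 1), (walkCount i n : ℝ) * x ^ i) * t ^ n)
      (1 / (t * ((1 + Real.sqrt (1 - 4 * t ^ 2)) / (2 * t) - x))) := by
  open WalkAux in
  have hx1' : x < xone t := hx1
  have hxone1 : 1 < xone t := one_lt_xone ht0 ht1
  have hxonep : (0:ℝ) < xone t := by linarith
  have htne : t ≠ 0 := ne_of_gt ht0
  set x₁ := xone t with hx₁def
  have hS : (1 / (t * ((1 + Real.sqrt (1 - 4 * t ^ 2)) / (2 * t) - x))) = 1 / (t * (x₁ - x)) := rfl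
  rw [hS]
  set S : ℝ := 1 / (t * (x₁ - x)) with hSdef
  set Gs : ℕ × ℕ → ℝ := fun p => (walkCount p.1 p.2 : ℝ) * x ^ p.1 * t ^ p.2 with hGs
  have hGnonneg : ∀ p, 0 ≤ Gs p := fun p => by
    simp only [hGs]; positivity
  -- row sums
  have hrow : ∀ i : ℕ, HasSum (fun n => Gs (i, n)) (x ^ i * (1 / (t * x₁ ^ (i + 1)))) := by
    intro i
    have h := (summable_walk ht0 ht1 i).hasSum
    have hFi : (∑' n : ℕ, (walkCount i n : ℝ) * t ^ n) = 1 / (t * x₁ ^ (i + 1)) :=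
      F_eq ht0 ht1 i
    rw [hFi] at h
    have h2 := h.mul_left (x ^ i)
    have he : (fun n => Gs (i, n)) = fun n => x ^ i * ((walkCount i n : ℝ) * t ^ n) :=
      funext fun n => by simp only [hGs]; ring
    rw [he]
    exact h2
  -- column sum (geometric)
  have hcol : HasSum (fun i : ℕ => x ^ i * (1 / (t * x₁ ^ (i + 1)))) S := by
    have hratio0 : 0 ≤ x / x₁ := div_nonneg hx0 hxonep.le
    have hratio1 : x / x₁ < 1 := (div_lt_one hxonep).2 hx1'
    have hg := (hasSum_geometric_of_lt_one hratio0 hratio1).mul_left (1 / (t * x₁))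
    have he : (fun i : ℕ => x ^ i * (1 / (t * x₁ ^ (i + 1)))) =
        fun i : ℕ => 1 / (t * x₁) * (x / x₁) ^ i := by
      funext i
      have hne1 : x₁ ≠ 0 := ne_of_gt hxonep
      have hne2 : x₁ ^ i ≠ 0 := pow_ne_zero _ hne1
      rw [div_pow, pow_succ, mul_one_div, one_div_mul_eq_div, div_div,
        div_eq_div_iff (by simp [htne, hne1, hne2, mul_ne_zero])
          (by simp [htne, hne1, hne2, mul_ne_zero])]
      ring
    rw [he]
    have hval : 1 / (t * x₁) * (1 - x / x₁)⁻¹ = S := by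
      have hne1 : x₁ ≠ 0 := ne_of_gt hxonep
      have hne3 : x₁ - x ≠ 0 := by intro h; apply absurd hx1'; linarith [sub_eq_zero.1 h]
      rw [hSdef]
      field_simp
    rw [← hval]
    exact hg
  -- summability of the double family
  have hsummable : Summable Gs := by
    rw [summable_prod_of_nonneg hGnonneg]
    constructor
    · intro i; exact (hrow i).summable
    · apply Summable.congr hcol.summable
      intro i
      exact ((hrow i).tsum_eq).symm
  have hGsum : HasSum Gs S := by
    have h1 := hsummable.hasSum
    have h2 : HasSum (fun i : ℕ => x ^ i * (1 / (t * x₁ ^ (i + 1)))) (∑' p, Gs p) :=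
      h1.prod_fiberwise hrow
    rwa [h2.unique hcol] at h1
  -- swap coordinates
  have hswap : HasSum (fun p : ℕ × ℕ => Gs (p.2, p.1)) S :=
    ((Equiv.prodComm ℕ ℕ).hasSum_iff).2 hGsum
  -- fiberwise over n
  have hfib : ∀ n : ℕ, HasSum (fun i => Gs (i, n))
      (∑ i ∈ Finset.range (n + 1), (walkCount i n : ℝ) * x ^ i * t ^ n) := by
    intro n
    apply hasSum_sum_of_ne_finset_zero
    intro i hi
    simp only [Finset.mem_range, not_lt] at hi
    simp only [hGs]
    rw [walkCount_eq_zero (by omega)]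
    simp
  have hfinal := hswap.prod_fiberwise hfib
  have he : (fun n : ℕ => (∑ i ∈ Finset.range (n + 1), (walkCount i n : ℝ) * x ^ i) * t ^ n) =
      fun n : ℕ => ∑ i ∈ Finset.range (n + 1), (walkCount i n : ℝ) * x ^ i * t ^ n := by
    funext n
    rw [Finset.sum_mul]
  rw [he]
  exact hfinal
end

section
/- Let F be the formal power series in t over the polynomial ring ℚ[X] whose n-th coefficient is the polynomial Σ_{i=0}^{n} f(i,n)·X^i. Then F satisfies the algebraic relation (X·t − X²·t² − t²)·F² + (1 − 2·X·t)·F − 1 = 0 in ℚ[X]⟦t⟧. -/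
/-- The full generating function `F(X;t)` as a power series in `t` over `ℚ[X]`. -/
noncomputable def walkGenFun : PowerSeries (Polynomial ℚ) :=
  PowerSeries.mk fun n =>
    ∑ i ∈ Finset.range (n + 1), Polynomial.C (walkCount i n : ℚ) * Polynomial.X ^ i

open PowerSeries


def Wk (i n : ℕ) := {w : Fin (n + 1) → ℕ //
    w 0 = 0 ∧ w (Fin.last n) = i ∧
    ∀ k : Fin n, ((w k.succ : ℤ) - (w k.castSucc : ℤ)).natAbs = 1}

def WkAdj (i n : ℕ) := {w : Fin (n + 1) → ℕ //
    w 0 = 0 ∧ ((w (Fin.last n) : ℤ) - (i : ℤ)).natAbs = 1 ∧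
    ∀ k : Fin n, ((w k.succ : ℤ) - (w k.castSucc : ℤ)).natAbs = 1}

def peel (i n : ℕ) : Wk i (n + 1) ≃ WkAdj i n where
  toFun w := ⟨Fin.init w.1, by
    obtain ⟨w, h0, hl, hs⟩ := w
    refine ⟨?_, ?_, ?_⟩
    · show w _ = 0
      simpa using h0
    · have := hs (Fin.last n)
      rw [Fin.succ_last, hl] at this
      show ((w _ : ℤ) - _).natAbs = 1
      omega
    · intro k
      have := hs k.castSucc
      rw [Fin.succ_castSucc] at this
      simpa [Fin.init] using this⟩
  invFun v := ⟨Fin.snoc v.1 i, by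
    obtain ⟨v, h0, hl, hs⟩ := v
    have h00 : (0 : Fin (n + 2)) = Fin.castSucc (0 : Fin (n + 1)) := by ext; simp
    refine ⟨?_, by simp, ?_⟩
    · rw [h00, Fin.snoc_castSucc]; exact h0
    · intro k
      induction k using Fin.lastCases with
      | last =>
        rw [Fin.succ_last]
        simp only [Fin.snoc_last, Fin.snoc_castSucc]
        omega
      | cast j =>
        rw [Fin.succ_castSucc]
        simp only [Fin.snoc_castSucc]
        exact hs j⟩
  left_inv w := by
    apply Subtype.ext
    obtain ⟨w, h0, hl, hs⟩ := w
    simp only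
    subst hl
    rw [Fin.snoc_init_self]
  right_inv v := by
    apply Subtype.ext
    dsimp only
    exact Fin.init_snoc _ _

def splitAdj (i n : ℕ) : WkAdj (i + 1) n ≃ Wk (i + 2) n ⊕ Wk i n where
  toFun w := if h : w.1 (Fin.last n) = i + 2
    then Sum.inl ⟨w.1, w.2.1, h, w.2.2.2⟩
    else Sum.inr ⟨w.1, w.2.1, by have := w.2.2.1; omega, w.2.2.2⟩
  invFun z := z.elim (fun w => ⟨w.1, w.2.1, by have := w.2.2.1; omega, w.2.2.2⟩)
    (fun w => ⟨w.1, w.2.1, by have := w.2.2.1; omega, w.2.2.2⟩)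
  left_inv w := by
    by_cases h : w.1 (Fin.last n) = i + 2 <;> simp [h] <;> rfl
  right_inv z := by
    rcases z with w | w
    · change (if h : w.1 (Fin.last n) = i + 2 then _ else _) = _
      simp [w.2.2.1]
      rfl
    · have := w.2.2.1
      have hne : w.1 (Fin.last n) ≠ i + 2 := by omega
      change (if h : w.1 (Fin.last n) = i + 2 then _ else _) = _
      simp [hne]
      rfl

def zeroAdj (n : ℕ) : WkAdj 0 n ≃ Wk 1 n where
  toFun w := ⟨w.1, w.2.1, by have := w.2.2.1; omega, w.2.2.2⟩
  invFun w := ⟨w.1, w.2.1, by have := w.2.2.1; omega, w.2.2.2⟩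
  left_inv w := rfl
  right_inv w := rfl

lemma walkCount_eq_s13 (i n : ℕ) : walkCount i n = Nat.card (Wk i n) := rfl

lemma walk_le {n : ℕ} (w : Fin (n + 1) → ℕ) (h0 : w 0 = 0)
    (hs : ∀ k : Fin n, ((w k.succ : ℤ) - (w k.castSucc : ℤ)).natAbs = 1) :
    ∀ k : Fin (n + 1), w k ≤ (k : ℕ) := by
  intro k
  induction k using Fin.induction with
  | zero => simp [h0]
  | succ k ih =>
    have := hs k
    have h1 : w k.castSucc ≤ (k : ℕ) := ih
    simp only [Fin.val_succ]
    omega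

instance Wk_finite (i n : ℕ) : Finite (Wk i n) := by
  apply Finite.of_injective (f := fun (w : Wk i n) (k : Fin (n+1)) =>
    (⟨w.1 k, lt_of_le_of_lt (walk_le w.1 w.2.1 w.2.2.2 k) k.isLt⟩ : Fin (n+1)))
  intro a b hab
  apply Subtype.ext
  funext k
  exact congrArg Fin.val (congrFun hab k)

lemma walkCount_zero (i : ℕ) : walkCount i 0 = if i = 0 then 1 else 0 := by
  rw [walkCount_eq_s13]
  rcases eq_or_ne i 0 with rfl | h
  · rw [if_pos rfl]
    have e : Wk 0 0 ≃ PUnit.{1} := {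
      toFun := fun _ => PUnit.unit
      invFun := fun _ => ⟨fun _ => 0, rfl, rfl, fun k => k.elim0⟩
      left_inv := fun w => by
        apply Subtype.ext
        funext k
        have h0 := w.2.1
        have hk : k = 0 := Fin.ext (by omega)
        rw [hk]
        exact h0.symm
      right_inv := fun _ => rfl }
    rw [Nat.card_congr e]
    simp
  · rw [if_neg h]
    have : IsEmpty (Wk i 0) := by
      constructor
      rintro ⟨w, h0, hl, -⟩
      exact h (by rw [← hl, show Fin.last 0 = 0 from rfl, h0])
    simp [Nat.card_of_isEmpty]

lemma walkCount_zero_succ (n : ℕ) : walkCount 0 (n + 1) = walkCount 1 n := by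
  rw [walkCount_eq_s13, walkCount_eq_s13]
  rw [Nat.card_congr ((peel 0 n).trans (zeroAdj n))]

lemma walkCount_succ_succ (i n : ℕ) :
    walkCount (i + 1) (n + 1) = walkCount i n + walkCount (i + 2) n := by
  rw [walkCount_eq_s13, walkCount_eq_s13, walkCount_eq_s13]
  rw [Nat.card_congr ((peel (i + 1) n).trans (splitAdj i n)), Nat.card_sum]
  omega

lemma walkCount_gt (i n : ℕ) (h : n < i) : walkCount i n = 0 := by
  rw [walkCount_eq_s13]
  have : IsEmpty (Wk i n) := by
    constructor
    rintro ⟨w, h0, hl, hs⟩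
    have := walk_le w h0 hs (Fin.last n)
    rw [hl] at this
    simp [Fin.last] at this
    omega
  simp [Nat.card_of_isEmpty]

noncomputable def catS : PowerSeries (Polynomial ℚ) :=
  PowerSeries.mk fun n => if 2 ∣ n then Polynomial.C ((catalan (n / 2) : ℚ)) else 0

lemma sum_even_range (m : ℕ) (g : ℕ → Polynomial ℚ) :
    ∑ k ∈ Finset.range (2 * m + 1), (if 2 ∣ k then g (k / 2) else 0) =
      ∑ j ∈ Finset.range (m + 1), g j := by
  induction m with
  | zero => simp
  | succ m ih =>
    have h1 : 2 * (m + 1) + 1 = (2 * m + 1) + 1 + 1 := by ring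
    rw [h1, Finset.sum_range_succ, Finset.sum_range_succ, ih,
      Finset.sum_range_succ]
    have hodd : ¬ (2 ∣ 2 * m + 1) := by omega
    rw [if_neg hodd, if_pos (by omega : 2 ∣ 2 * m + 1 + 1)]
    have h2 : (2 * m + 1 + 1) / 2 = m + 1 := by omega
    rw [h2, add_zero]
    conv_rhs => rw [Finset.sum_range_succ, Finset.sum_range_succ]

lemma catS_eq : catS = 1 + PowerSeries.X ^ 2 * catS ^ 2 := by
  apply PowerSeries.ext
  intro n
  rcases n with _ | _ | n
  · simp [catS, coeff_mk, coeff_one, coeff_X_pow_mul']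
  · simp [catS, coeff_mk, coeff_one, coeff_X_pow_mul']
  · rw [map_add, coeff_one, if_neg (by omega), sq (PowerSeries.X),
      mul_assoc, coeff_succ_X_mul, coeff_succ_X_mul, sq, coeff_mul,
      Finset.Nat.sum_antidiagonal_eq_sum_range_succ_mk]
    simp only [catS, coeff_mk]
    rcases Nat.even_or_odd n with ⟨m, rfl⟩ | hodd
    · have hmm : m + m = 2 * m := by ring
      rw [hmm]
      have hcong : ∀ k ∈ Finset.range (2 * m + 1),
          ((if 2 ∣ k then Polynomial.C ((catalan (k / 2) : ℚ)) else 0) *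
            (if 2 ∣ (2 * m - k) then Polynomial.C ((catalan ((2 * m - k) / 2) : ℚ)) else 0)) =
          (if 2 ∣ k then Polynomial.C ((catalan (k / 2) : ℚ) * (catalan (m - k / 2) : ℚ)) else 0) := by
        intro k hk
        rw [Finset.mem_range] at hk
        by_cases h : 2 ∣ k
        · rw [if_pos h, if_pos (by omega), if_pos h]
          have : (2 * m - k) / 2 = m - k / 2 := by omega
          rw [this, map_mul]
        · rw [if_neg h, if_neg (by omega : ¬ 2 ∣ 2 * m - k), if_neg h, mul_zero]
      rw [Finset.sum_congr rfl hcong, sum_even_range m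
        (fun j => Polynomial.C ((catalan j : ℚ) * (catalan (m - j) : ℚ)))]
      rw [if_pos (by omega : 2 ∣ 2 * m + 2)]
      have h2 : (2 * m + 2) / 2 = m + 1 := by omega
      rw [h2, zero_add, ← map_sum]
      congr 1
      have hcat : catalan (m + 1) = ∑ x ∈ Finset.range (m + 1), catalan x * catalan (m - x) := by
        rw [catalan_succ]
        exact Fin.sum_univ_eq_sum_range (fun x => catalan x * catalan (m - x)) (m + 1)
      rw [hcat]
      push_cast
      rfl
    · obtain ⟨m, rfl⟩ := hodd
      rw [if_neg (by omega : ¬ 2 ∣ 2 * m + 1 + 2), zero_add]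
      symm
      apply Finset.sum_eq_zero
      intro k hk
      rw [Finset.mem_range] at hk
      by_cases h : 2 ∣ k
      · rw [if_neg (by omega : ¬ 2 ∣ 2 * m + 1 - k), mul_zero]
      · rw [if_neg h, zero_mul]

noncomputable def uS : PowerSeries (Polynomial ℚ) :=
  1 - PowerSeries.C (R := Polynomial ℚ) Polynomial.X * PowerSeries.X * catS

noncomputable def vS : PowerSeries (Polynomial ℚ) := uS.invOfUnit 1

lemma uS_const : PowerSeries.constantCoeff (R := Polynomial ℚ) uS = 1 := by
  simp [uS]

lemma huv : uS * vS = 1 :=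
  PowerSeries.mul_invOfUnit uS 1 (by rw [uS_const, Units.val_one])

noncomputable def FS : PowerSeries (Polynomial ℚ) := catS * vS

lemma hFSu : FS * uS = catS := by
  rw [FS, mul_assoc, mul_comm vS uS, huv, mul_one]

/-- The key linear functional equation for `FS`. -/
lemma FS_key : PowerSeries.C (R := Polynomial ℚ) Polynomial.X * FS =
    PowerSeries.C (R := Polynomial ℚ) Polynomial.X +
      PowerSeries.X * (((PowerSeries.C (R := Polynomial ℚ) Polynomial.X) ^ 2 + 1) * FS - catS) := by
  set Xc := PowerSeries.C (R := Polynomial ℚ) Polynomial.X with hXc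
  have h : (Xc * FS - Xc - PowerSeries.X * ((Xc ^ 2 + 1) * FS - catS)) * uS = 0 := by
    have h1 := hFSu
    rw [uS] at h1 ⊢
    linear_combination (Xc - PowerSeries.X * (Xc ^ 2 + 1)) * h1 + Xc * catS_eq
  have h2 : (Xc * FS - Xc - PowerSeries.X * ((Xc ^ 2 + 1) * FS - catS)) = 0 := by
    calc Xc * FS - Xc - PowerSeries.X * ((Xc ^ 2 + 1) * FS - catS)
        = (Xc * FS - Xc - PowerSeries.X * ((Xc ^ 2 + 1) * FS - catS)) * (uS * vS) := by
          rw [huv, mul_one]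
      _ = ((Xc * FS - Xc - PowerSeries.X * ((Xc ^ 2 + 1) * FS - catS)) * uS) * vS := by ring
      _ = 0 := by rw [h, zero_mul]
  linear_combination h2

lemma FS_coeff_zero : PowerSeries.coeff (R := Polynomial ℚ) 0 FS = 1 := by
  have h := congrArg (PowerSeries.constantCoeff (R := Polynomial ℚ)) hFSu
  rw [map_mul, uS_const, mul_one] at h
  have : PowerSeries.constantCoeff (R := Polynomial ℚ) catS = 1 := by
    simp [catS, PowerSeries.constantCoeff_mk]
  rw [← PowerSeries.coeff_zero_eq_constantCoeff] at h this
  rw [h, this]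

lemma catS_coeff_C (n : ℕ) :
    PowerSeries.coeff (R := Polynomial ℚ) n catS =
      Polynomial.C ((PowerSeries.coeff (R := Polynomial ℚ) n catS).coeff 0) := by
  rw [catS, PowerSeries.coeff_mk]
  split <;> simp

lemma FS_rec (n : ℕ) : Polynomial.X * PowerSeries.coeff (R := Polynomial ℚ) (n + 1) FS =
    (Polynomial.X ^ 2 + 1) * PowerSeries.coeff (R := Polynomial ℚ) n FS -
      PowerSeries.coeff (R := Polynomial ℚ) n catS := by
  have h := congrArg (PowerSeries.coeff (R := Polynomial ℚ) (n + 1)) FS_key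
  rw [PowerSeries.coeff_C_mul, map_add, PowerSeries.coeff_C, if_neg (by omega),
    PowerSeries.coeff_succ_X_mul, map_sub, add_mul, one_mul, map_add, zero_add] at h
  have hpow : (PowerSeries.C (R := Polynomial ℚ) Polynomial.X) ^ 2 =
      PowerSeries.C (R := Polynomial ℚ) (Polynomial.X ^ 2) := by rw [map_pow]
  rw [hpow, PowerSeries.coeff_C_mul] at h
  rw [h]
  ring

lemma F_coeff_zero : PowerSeries.coeff (R := Polynomial ℚ) 0 walkGenFun = 1 := by
  simp [walkGenFun, PowerSeries.coeff_mk, walkCount_zero]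

lemma F_coeff_poly (n j : ℕ) :
    (PowerSeries.coeff (R := Polynomial ℚ) n walkGenFun).coeff j = (walkCount j n : ℚ) := by
  rw [walkGenFun, PowerSeries.coeff_mk, Polynomial.finset_sum_coeff]
  simp only [Polynomial.coeff_C_mul, Polynomial.coeff_X_pow, mul_ite, mul_one, mul_zero]
  rw [Finset.sum_ite_eq (Finset.range (n + 1)) j (fun i => ((walkCount i n : ℚ)))]
  split
  · rfl
  · rw [walkCount_gt j n (by rename_i h; rw [Finset.mem_range] at h; omega)]
    norm_num

lemma F_rec (n : ℕ) : Polynomial.X * PowerSeries.coeff (R := Polynomial ℚ) (n + 1) walkGenFun =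
    (Polynomial.X ^ 2 + 1) * PowerSeries.coeff (R := Polynomial ℚ) n walkGenFun -
      Polynomial.C ((walkCount 0 n : ℚ)) := by
  set p := PowerSeries.coeff (R := Polynomial ℚ) n walkGenFun with hp
  set q := PowerSeries.coeff (R := Polynomial ℚ) (n + 1) walkGenFun with hq
  have hrw : (Polynomial.X ^ 2 + 1) * p = Polynomial.X * (Polynomial.X * p) + p := by ring
  rw [hrw]
  apply Polynomial.ext
  intro j
  rcases j with _ | _ | j
  · simp only [Polynomial.coeff_add, Polynomial.coeff_sub, Polynomial.mul_coeff_zero,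
      Polynomial.coeff_X_zero, zero_mul, Polynomial.coeff_C, if_pos rfl, hp, hq]
    rw [F_coeff_poly]
    simp
  · simp only [Polynomial.coeff_X_mul, Polynomial.coeff_add, Polynomial.coeff_sub,
      Polynomial.mul_coeff_zero, Polynomial.coeff_X_zero, zero_mul,
      Polynomial.coeff_C, if_neg (by omega : (1 : ℕ) ≠ 0), hp, hq]
    rw [F_coeff_poly, F_coeff_poly, walkCount_zero_succ]
    ring
  · have h2 : j + 1 + 1 = (j + 1) + 1 := rfl
    simp only [Polynomial.coeff_X_mul, Polynomial.coeff_add, Polynomial.coeff_sub,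
      Polynomial.coeff_C, if_neg (by omega : j + 1 + 1 ≠ 0), hp, hq]
    rw [F_coeff_poly, F_coeff_poly, F_coeff_poly, walkCount_succ_succ]
    push_cast
    ring

lemma F_eq_FS : walkGenFun = FS := by
  apply PowerSeries.ext
  intro n
  induction n with
  | zero => rw [F_coeff_zero, FS_coeff_zero]
  | succ n ih =>
    have h1 := F_rec n
    have h2 := FS_rec n
    rw [← ih] at h2
    have h0 : Polynomial.C ((walkCount 0 n : ℚ)) = PowerSeries.coeff (R := Polynomial ℚ) n catS := by
      have e1 := congrArg (fun r => Polynomial.coeff r 0) h1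
      have e2 := congrArg (fun r => Polynomial.coeff r 0) h2
      simp only [Polynomial.mul_coeff_zero, Polynomial.coeff_X_zero, zero_mul,
        Polynomial.coeff_sub, Polynomial.coeff_add, Polynomial.coeff_one,
        Polynomial.coeff_C, Polynomial.coeff_X_pow, if_pos rfl] at e1 e2
      rw [catS_coeff_C n]
      congr 1
      simp only [if_true] at e1 e2
      linarith
    rw [h0] at h1
    exact mul_left_cancel₀ Polynomial.X_ne_zero (h1.trans h2.symm)

theorem walkGenFun_algebraic :
    ((PowerSeries.C (R := Polynomial ℚ) Polynomial.X) * PowerSeries.X -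
        (PowerSeries.C (R := Polynomial ℚ) Polynomial.X) ^ 2 * PowerSeries.X ^ 2 -
        PowerSeries.X ^ 2) * walkGenFun ^ 2 +
      (1 - 2 * (PowerSeries.C (R := Polynomial ℚ) Polynomial.X) * PowerSeries.X) * walkGenFun -
      1 = 0 := by
  rw [F_eq_FS]
  set Xc := PowerSeries.C (R := Polynomial ℚ) Polynomial.X with hXc
  set t := (PowerSeries.X : PowerSeries (Polynomial ℚ)) with ht
  have hu := hFSu
  rw [uS] at hu
  have h1 : ((Xc * t - Xc ^ 2 * t ^ 2 - t ^ 2) * FS ^ 2 + (1 - 2 * Xc * t) * FS - 1) *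
      ((1 - Xc * t * catS) * (1 - Xc * t * catS)) = 0 := by
    linear_combination ((Xc * t - Xc ^ 2 * t ^ 2 - t ^ 2) * (FS * (1 - Xc * t * catS) + catS) +
      (1 - 2 * Xc * t) * (1 - Xc * t * catS)) * hu + catS_eq
  calc (Xc * t - Xc ^ 2 * t ^ 2 - t ^ 2) * FS ^ 2 + (1 - 2 * Xc * t) * FS - 1
      = ((Xc * t - Xc ^ 2 * t ^ 2 - t ^ 2) * FS ^ 2 + (1 - 2 * Xc * t) * FS - 1) *
          ((uS * vS) * (uS * vS)) := by rw [huv]; ring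
    _ = (((Xc * t - Xc ^ 2 * t ^ 2 - t ^ 2) * FS ^ 2 + (1 - 2 * Xc * t) * FS - 1) *
          ((1 - Xc * t * catS) * (1 - Xc * t * catS))) * (vS * vS) := by rw [uS]; ring
    _ = 0 := by rw [h1, zero_mul]
end

section
/- The formal power series E ∈ ℚ⟦t⟧ whose n-th coefficient is f(0,n) satisfies the second-order linear differential equation t·(1 − 4t²)·E″ + (3 − 16t²)·E′ − 8t·E = 0, where E′ and E″ denote the first and second formal derivatives of E with respect to t. -/
open List DyckStep

namespace ExcursionAux

/-- integer height of prefix of a step list -/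
def hgt (l : List DyckStep) (i : ℕ) : ℤ :=
  ((l.take i).count U : ℤ) - (l.take i).count D

lemma count_take_succ (l : List DyckStep) (i : ℕ) (h : i < l.length) (s : DyckStep) :
    (l.take (i+1)).count s = (l.take i).count s + if l[i] = s then 1 else 0 := by
  rw [← List.take_concat_get' l i h, List.count_append, List.count_singleton']

lemma hgt_succ (l : List DyckStep) (i : ℕ) (h : i < l.length) :
    hgt l (i+1) = hgt l i + (if l[i] = U then 1 else -1) := by
  unfold hgt
  rw [count_take_succ l i h U, count_take_succ l i h D]
  rcases l[i].dichotomy with hU | hD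
  · simp [hU]; ring
  · simp [hD]; ring

lemma hgt_zero (l : List DyckStep) : hgt l 0 = 0 := by simp [hgt]

end ExcursionAux
namespace ExcursionAux

variable {n : ℕ}

/-- the step list of a walk -/
def stepsOf (n : ℕ) (w : Fin (n+1) → ℕ) : List DyckStep :=
  List.ofFn (fun k : Fin n => if w k.castSucc < w k.succ then U else D)

@[simp] lemma length_stepsOf (w : Fin (n+1) → ℕ) : (stepsOf n w).length = n := by
  simp [stepsOf]

lemma hgt_stepsOf (w : Fin (n+1) → ℕ) (h0 : w 0 = 0)
    (hs : ∀ k : Fin n, ((w k.succ : ℤ) - (w k.castSucc : ℤ)).natAbs = 1)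
    (i : ℕ) (hi : i ≤ n) :
    hgt (stepsOf n w) i = w ⟨i, Nat.lt_succ_of_le hi⟩ := by
  induction i with
  | zero =>
    rw [hgt_zero]
    have : (⟨0, Nat.lt_succ_of_le (Nat.zero_le n)⟩ : Fin (n+1)) = 0 := rfl
    rw [this, h0]; rfl
  | succ i ih =>
    have hi' : i < n := hi
    have hlen : i < (stepsOf n w).length := by simpa using hi'
    rw [hgt_succ _ _ hlen, ih (le_of_lt hi')]
    have hget : (stepsOf n w)[i] =
        if w (⟨i, hi'⟩ : Fin n).castSucc < w (⟨i, hi'⟩ : Fin n).succ then U else D := by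
      simp [stepsOf]
    have hstep := hs ⟨i, hi'⟩
    rw [Int.natAbs_eq_iff] at hstep
    have hc : (⟨i, hi'⟩ : Fin n).castSucc = ⟨i, Nat.lt_succ_of_le (le_of_lt hi')⟩ := rfl
    have hsucc : (⟨i, hi'⟩ : Fin n).succ = ⟨i+1, Nat.lt_succ_of_le hi⟩ := rfl
    rw [hc, hsucc] at hstep
    rcases hstep with h1 | h1
    · have hlt : w ⟨i, Nat.lt_succ_of_le (le_of_lt hi')⟩ < w ⟨i+1, Nat.lt_succ_of_le hi⟩ := by
        omega
      rw [hget, hc, hsucc, if_pos hlt]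
      simp; omega
    · have hlt : ¬ w ⟨i, Nat.lt_succ_of_le (le_of_lt hi')⟩ < w ⟨i+1, Nat.lt_succ_of_le hi⟩ := by
        omega
      rw [hget, hc, hsucc, if_neg hlt]
      simp; omega

end ExcursionAux
namespace ExcursionAux

/-- the Dyck word of a walk returning to 0 -/
def dyckOf (n : ℕ) (w : {w : Fin (n + 1) → ℕ //
    w 0 = 0 ∧ w (Fin.last n) = 0 ∧
    ∀ k : Fin n, ((w k.succ : ℤ) - (w k.castSucc : ℤ)).natAbs = 1}) : DyckWord where
  toList := stepsOf n w.1
  count_U_eq_count_D := by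
    obtain ⟨h0, hl, hs⟩ := w.2
    have h := hgt_stepsOf w.1 h0 hs n le_rfl
    have : (⟨n, Nat.lt_succ_of_le le_rfl⟩ : Fin (n+1)) = Fin.last n := rfl
    rw [this, hl] at h
    unfold hgt at h
    rw [List.take_of_length_le (by simp)] at h
    omega
  count_D_le_count_U i := by
    obtain ⟨h0, hl, hs⟩ := w.2
    rcases le_or_gt i n with hi | hi
    · have h := hgt_stepsOf w.1 h0 hs i hi
      unfold hgt at h
      omega
    · have h := hgt_stepsOf w.1 h0 hs n le_rfl
      unfold hgt at h
      rw [List.take_of_length_le (le_of_lt (by simpa using hi))]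
      rw [List.take_of_length_le (by simp)] at h
      omega

/-- the walk of a Dyck word -/
def walkOf (n : ℕ) (p : {p : DyckWord // p.toList.length = n}) : Fin (n+1) → ℕ :=
  fun k => (p.1.toList.take k).count U - (p.1.toList.take k).count D

lemma walkOf_cast (p : {p : DyckWord // p.toList.length = n}) (k : Fin (n+1)) :
    ((walkOf n p k : ℕ) : ℤ) = hgt p.1.toList k := by
  unfold walkOf hgt
  rw [Nat.cast_sub (p.1.count_D_le_count_U k)]

lemma walkOf_mem (p : {p : DyckWord // p.toList.length = n}) :
    walkOf n p 0 = 0 ∧ walkOf n p (Fin.last n) = 0 ∧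
    ∀ k : Fin n, ((walkOf n p k.succ : ℤ) - (walkOf n p k.castSucc : ℤ)).natAbs = 1 := by
  obtain ⟨p, hp⟩ := p
  refine ⟨by simp [walkOf], ?_, ?_⟩
  · show (p.toList.take (n : ℕ)).count U - (p.toList.take (n : ℕ)).count D = 0
    rw [List.take_of_length_le (by simp [hp, Fin.last]), ← p.count_U_eq_count_D, Nat.sub_self]
  · intro k
    have hk : (k : ℕ) < p.toList.length := by rw [hp]; exact k.2
    have h1 := walkOf_cast ⟨p, hp⟩ k.succ
    have h2 := walkOf_cast ⟨p, hp⟩ k.castSucc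
    rw [h1, h2]
    have hsv : ((k.succ : Fin (n+1)) : ℕ) = (k : ℕ) + 1 := rfl
    have hcv : ((k.castSucc : Fin (n+1)) : ℕ) = (k : ℕ) := rfl
    rw [hsv, hcv, hgt_succ _ _ hk]
    rcases (p.toList[(k:ℕ)]).dichotomy with h | h <;> simp [h]

end ExcursionAux
namespace ExcursionAux

/-- Walks returning to 0 are equivalent to Dyck words of the same length. -/
def walkDyckEquiv (n : ℕ) :
    {w : Fin (n + 1) → ℕ //
      w 0 = 0 ∧ w (Fin.last n) = 0 ∧
      ∀ k : Fin n, ((w k.succ : ℤ) - (w k.castSucc : ℤ)).natAbs = 1} ≃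
    {p : DyckWord // p.toList.length = n} where
  toFun w := ⟨dyckOf n w, by simp [dyckOf]⟩
  invFun p := ⟨walkOf n p, walkOf_mem p⟩
  left_inv w := by
    obtain ⟨hw0, hwl, hws⟩ := w.2
    apply Subtype.ext
    funext k
    have hcast := walkOf_cast (n := n) ⟨dyckOf n w, by simp [dyckOf]⟩ k
    have hh : hgt (dyckOf n w).toList (k : ℕ) = w.1 ⟨(k : ℕ), k.2⟩ := by
      show hgt (stepsOf n w.1) (k : ℕ) = _
      exact hgt_stepsOf w.1 hw0 hws (k : ℕ) (Nat.lt_succ_iff.mp k.2)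
    have : (⟨(k : ℕ), k.2⟩ : Fin (n+1)) = k := rfl
    rw [this] at hh
    have := hcast.trans hh
    exact_mod_cast this
  right_inv p := by
    apply Subtype.ext
    apply DyckWord.ext
    show stepsOf n (walkOf n p) = p.1.toList
    apply List.ext_getElem (by simp [p.2])
    intro i h1 h2
    have hi : i < n := by simpa using h1
    have hlen : i < p.1.toList.length := h2
    have hg : (stepsOf n (walkOf n p))[i] =
        if walkOf n p (⟨i, hi⟩ : Fin n).castSucc < walkOf n p (⟨i, hi⟩ : Fin n).succ
        then U else D := by
      simp [stepsOf]
    rw [hg]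
    have hc1 : ((walkOf n p (⟨i, hi⟩ : Fin n).castSucc : ℕ) : ℤ) = hgt p.1.toList i := by
      simpa using walkOf_cast p (⟨i, hi⟩ : Fin n).castSucc
    have hc2 : ((walkOf n p (⟨i, hi⟩ : Fin n).succ : ℕ) : ℤ) = hgt p.1.toList (i+1) := by
      simpa using walkOf_cast p (⟨i, hi⟩ : Fin n).succ
    have hstep := hgt_succ p.1.toList i hlen
    rcases (p.1.toList[i]).dichotomy with h | h
    · rw [h] at hstep ⊢
      rw [if_pos rfl] at hstep
      have heq : walkOf n p (⟨i, hi⟩ : Fin n).succ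
          = walkOf n p (⟨i, hi⟩ : Fin n).castSucc + 1 := by
        have : ((walkOf n p (⟨i, hi⟩ : Fin n).succ : ℕ) : ℤ)
            = ((walkOf n p (⟨i, hi⟩ : Fin n).castSucc : ℕ) : ℤ) + 1 := by
          rw [hc2, hstep, hc1]
        exact_mod_cast this
      rw [if_pos (by rw [heq]; exact Nat.lt_succ_self _)]
    · rw [h] at hstep ⊢
      rw [if_neg (by simp)] at hstep
      have heq : walkOf n p (⟨i, hi⟩ : Fin n).castSucc
          = walkOf n p (⟨i, hi⟩ : Fin n).succ + 1 := by
        have : ((walkOf n p (⟨i, hi⟩ : Fin n).castSucc : ℕ) : ℤ)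
            = ((walkOf n p (⟨i, hi⟩ : Fin n).succ : ℕ) : ℤ) + 1 := by
          rw [hc2, hstep, hc1]; ring
        exact_mod_cast this
      rw [if_neg (by rw [heq]; omega)]

end ExcursionAux

namespace ExcursionAux

lemma walkCount_eq_card (n : ℕ) :
    walkCount 0 n = Nat.card {p : DyckWord // p.toList.length = n} :=
  Nat.card_congr (walkDyckEquiv n)

lemma walkCount_even (m : ℕ) : walkCount 0 (2 * m) = catalan m := by
  rw [walkCount_eq_card]
  have e : {p : DyckWord // p.toList.length = 2 * m} ≃ {p : DyckWord // p.semilength = m} :=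
    Equiv.subtypeEquivRight fun p => by
      rw [← p.two_mul_semilength_eq_length]; omega
  rw [Nat.card_congr e, Nat.card_eq_fintype_card]
  exact DyckWord.card_dyckWord_semilength_eq_catalan m

lemma walkCount_odd (n : ℕ) (hn : ¬ Even n) : walkCount 0 n = 0 := by
  rw [walkCount_eq_card]
  have : IsEmpty {p : DyckWord // p.toList.length = n} := by
    refine ⟨fun p => ?_⟩
    have := p.1.two_mul_semilength_eq_length
    rw [p.2] at this
    exact hn ⟨p.1.semilength, by omega⟩
  exact Nat.card_of_isEmpty

lemma cat_rec (j : ℕ) : (j + 2) * catalan (j + 1) = 2 * (2 * j + 1) * catalan j := by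
  apply Nat.eq_of_mul_eq_mul_left (show 0 < j + 1 by omega)
  calc (j + 1) * ((j + 2) * catalan (j + 1))
      = (j + 1) * Nat.centralBinom (j + 1) := by
        rw [show j + 2 = (j + 1) + 1 from rfl, succ_mul_catalan_eq_centralBinom (j + 1)]
    _ = 2 * (2 * j + 1) * Nat.centralBinom j := Nat.succ_mul_centralBinom_succ j
    _ = 2 * (2 * j + 1) * ((j + 1) * catalan j) := by rw [succ_mul_catalan_eq_centralBinom]
    _ = (j + 1) * (2 * (2 * j + 1) * catalan j) := by ring

end ExcursionAux
namespace ExcursionAux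

open PowerSeries

noncomputable def aseq (k : ℕ) : ℚ := (walkCount 0 k : ℚ)

lemma aseq_odd (m : ℕ) (h : ¬ Even m) : aseq m = 0 := by
  rw [aseq, walkCount_odd _ h]; simp

lemma aseq_zero : aseq 0 = 1 := by
  rw [aseq, show (0:ℕ) = 2 * 0 from rfl, walkCount_even]; simp [catalan_zero]

lemma aseq_two : aseq 2 = 1 := by
  rw [aseq, show (2:ℕ) = 2 * 1 from rfl, walkCount_even]; simp [catalan_one]

lemma aseq_one : aseq 1 = 0 := aseq_odd 1 (by decide)

lemma aseq_three : aseq 3 = 0 := aseq_odd 3 (by decide)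

lemma aseq_rec (m : ℕ) : ((m : ℚ) + 4) * aseq (m + 2) = 4 * ((m : ℚ) + 1) * aseq m := by
  rcases Nat.even_or_odd m with ⟨j, hj⟩ | hodd
  · subst hj
    have h2 : j + j + 2 = 2 * (j + 1) := by ring
    have h1 : j + j = 2 * j := by ring
    rw [aseq, aseq, h2, h1, walkCount_even, walkCount_even]
    have hq : ((j : ℚ) + 2) * catalan (j + 1) = 2 * (2 * j + 1) * catalan j := by
      exact_mod_cast cat_rec j
    push_cast
    linear_combination 2 * hq
  · have h1 : ¬ Even m := Nat.not_even_iff_odd.mpr hodd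
    have h2 : ¬ Even (m + 2) := by
      intro h; exact h1 (by rcases h with ⟨k, hk⟩; exact ⟨k - 1, by omega⟩)
    rw [aseq_odd _ h1, aseq_odd _ h2]; ring

theorem excursion_series_ode2' :
    X * (1 - 4 * X ^ 2) *
        (derivative ℚ (derivative ℚ (mk fun n => (walkCount 0 n : ℚ)))) +
      (3 - 16 * X ^ 2) * (derivative ℚ (mk fun n => (walkCount 0 n : ℚ))) -
      8 * X * (mk fun n => (walkCount 0 n : ℚ)) = (0 : ℚ⟦X⟧) := by
  set E : ℚ⟦X⟧ := mk fun n => (walkCount 0 n : ℚ) with hE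
  set E1 := derivative ℚ E with hE1
  set E2 := derivative ℚ E1 with hE2
  have hcE : ∀ n, coeff n E = aseq n := fun n => coeff_mk n _
  have hcE1 : ∀ n, coeff n E1 = aseq (n + 1) * (n + 1) := fun n => by
    rw [hE1, coeff_derivative, hcE]
  have hcE2 : ∀ n, coeff n E2 = aseq (n + 2) * (n + 2) * (n + 1) := fun n => by
    rw [hE2, coeff_derivative, hcE1]; push_cast; ring
  have expand : X * (1 - 4 * X ^ 2) * E2 + (3 - 16 * X ^ 2) * E1 - 8 * X * E
      = (X ^ 1 * E2 + C 3 * E1) -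
        (C 4 * (X ^ 3 * E2) + C 16 * (X ^ 2 * E1) + C 8 * (X ^ 1 * E)) := by
    rw [show (C 3 : ℚ⟦X⟧) = 3 from map_ofNat _ 3, show (C 4 : ℚ⟦X⟧) = 4 from map_ofNat _ 4,
      show (C 16 : ℚ⟦X⟧) = 16 from map_ofNat _ 16, show (C 8 : ℚ⟦X⟧) = 8 from map_ofNat _ 8]
    ring
  rw [expand]
  ext n
  rw [map_sub, map_add, map_add, map_add, coeff_C_mul, coeff_C_mul, coeff_C_mul, coeff_C_mul,
    coeff_X_pow_mul', coeff_X_pow_mul', coeff_X_pow_mul', coeff_X_pow_mul', map_zero]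
  match n with
  | 0 =>
    simp [hcE1, aseq_one]
  | 1 =>
    simp [hcE, hcE1, hcE2, aseq_zero, aseq_two]
    norm_num
  | 2 =>
    simp [hcE, hcE1, hcE2, aseq_one, aseq_three]
  | (d + 3) =>
    rw [if_pos (by omega), if_pos (by omega), if_pos (by omega), if_pos (by omega)]
    simp only [Nat.add_sub_cancel, show d + 3 - 3 = d from rfl, show d + 3 - 2 = d + 1 from rfl,
      show d + 3 - 1 = d + 2 from rfl]
    rw [hcE, hcE1, hcE1, hcE2, hcE2]
    have hrec : ((d : ℚ) + 6) * aseq (d + 4) = 4 * ((d : ℚ) + 3) * aseq (d + 2) := by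
      have := aseq_rec (d + 2)
      push_cast at this ⊢
      linear_combination this
    push_cast
    linear_combination ((d : ℚ) + 4) * hrec

end ExcursionAux

theorem excursion_series_ode2 :
    PowerSeries.X * (1 - 4 * PowerSeries.X ^ 2) *
        (PowerSeries.derivative ℚ
          (PowerSeries.derivative ℚ (PowerSeries.mk fun n => (walkCount 0 n : ℚ)))) +
      (3 - 16 * PowerSeries.X ^ 2) *
        (PowerSeries.derivative ℚ (PowerSeries.mk fun n => (walkCount 0 n : ℚ))) -
      8 * PowerSeries.X * (PowerSeries.mk fun n => (walkCount 0 n : ℚ)) = 0 :=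
  ExcursionAux.excursion_series_ode2'
end
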